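/- For every integer n ≥ 1 the q-Genocchi polynomials satisfy the linear homogeneous recurrence (1/(2q)) Σ_{k=0}^{n-2} [n choose k]_q g_{n-k,q} q^k G_{k,q}(x) + [n]_q (xq − 1/(2q)) q^{n-1} G_{n-1,q}(x) + q^{n-1} G_{n,q}(x) − [n]_q G_{n,q}(qx) = 0, as an identity of real polynomials in x (the sum is empty when n = 1). -/

import Mathlib

open Polynomial Finset

/-- The q-integer [n]_q = 1 + q + ... + q^(n-1). -/
noncomputable def qInt (q : ℝ) (n : ℕ) : ℝ := ∑ i ∈ Finset.range n, q ^ i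

/-- The q-factorial [n]_q! = [1]_q [2]_q ... [n]_q, with [0]_q! = 1. -/
noncomputable def qFact (q : ℝ) : ℕ → ℝ
  | 0 => 1
  | n + 1 => qFact q n * qInt q (n + 1)

/-- The q-binomial coefficient [n choose k]_q = [n]_q! / ([k]_q! [n-k]_q!). -/
noncomputable def qBinom (q : ℝ) (n k : ℕ) : ℝ := qFact q n / (qFact q k * qFact q (n - k))

/-- The q-derivative on real polynomials, determined by D_q(x^n) = [n]_q x^(n-1). -/
noncomputable def qDeriv (q : ℝ) (p : Polynomial ℝ) : Polynomial ℝ :=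
  p.sum fun n a => Polynomial.C (a * qInt q n) * Polynomial.X ^ (n - 1)

/-- The q-derivative on formal power series: `D_{q,t}(t^n) = [n]_q t^(n-1)`. -/
noncomputable def qDerivPS (q : ℝ) (f : PowerSeries ℝ) : PowerSeries ℝ :=
  PowerSeries.mk fun n => qInt q (n + 1) * PowerSeries.coeff (n + 1) f

/-- The q-exponential series `e_q(t) = Σ_{n≥0} t^n/[n]_q!`. -/
noncomputable def qExp (q : ℝ) : PowerSeries ℝ := PowerSeries.mk fun n => 1 / qFact q n

/-- The q-Genocchi polynomials `G_{n,q}(x) = Σ_{k=0}^n [n choose k]_q g_{k,q} x^(n-k)`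
attached to the q-Genocchi numbers (g_k). -/
noncomputable def qGenocchiPoly (q : ℝ) (g : ℕ → ℝ) (n : ℕ) : Polynomial ℝ :=
  ∑ k ∈ Finset.range (n + 1), Polynomial.C (qBinom q n k * g k) * Polynomial.X ^ (n - k)

/- ### Auxiliary lemmas -/

lemma qInt_add' (q : ℝ) (a b : ℕ) : qInt q (a + b) = qInt q a + q ^ a * qInt q b := by
  simp [qInt, Finset.sum_range_add, Finset.mul_sum, pow_add]

lemma qInt_one' (q : ℝ) : qInt q 1 = 1 := by simp [qInt]

lemma qInt_pos' {q : ℝ} (hq : 0 < q) {n : ℕ} (hn : 0 < n) : 0 < qInt q n := by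
  obtain ⟨m, rfl⟩ := Nat.exists_eq_succ_of_ne_zero hn.ne'
  exact Finset.sum_pos (fun i _ => pow_pos hq i) (by simp)

lemma qFact_pos' {q : ℝ} (hq : 0 < q) (n : ℕ) : 0 < qFact q n := by
  induction n with
  | zero => norm_num [qFact]
  | succ m ih => exact mul_pos ih (qInt_pos' hq m.succ_pos)

lemma qInt_eq' {q : ℝ} (hq : q ≠ 1) (n : ℕ) : qInt q n = (q ^ n - 1) / (q - 1) := by
  rw [qInt, geom_sum_eq hq]

lemma coeff_qDerivPS (q : ℝ) (f : PowerSeries ℝ) (n : ℕ) :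
    PowerSeries.coeff n (qDerivPS q f) = qInt q (n + 1) * PowerSeries.coeff (n + 1) f := by
  simp [qDerivPS]

lemma qDerivPS_add (q : ℝ) (u v : PowerSeries ℝ) :
    qDerivPS q (u + v) = qDerivPS q u + qDerivPS q v := by
  ext n; simp [coeff_qDerivPS, mul_add]

lemma qDerivPS_one (q : ℝ) : qDerivPS q (1 : PowerSeries ℝ) = 0 := by
  ext n; simp [coeff_qDerivPS]

lemma qDerivPS_qExp {q : ℝ} (hq : 0 < q) : qDerivPS q (qExp q) = qExp q := by
  ext n
  rw [coeff_qDerivPS]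
  simp only [qExp, PowerSeries.coeff_mk]
  rw [show qFact q (n + 1) = qFact q n * qInt q (n + 1) from rfl]
  have h1 : qInt q (n+1) ≠ 0 := (qInt_pos' hq n.succ_pos).ne'
  have h2 : qFact q n ≠ 0 := (qFact_pos' hq n).ne'
  field_simp

lemma qDerivPS_two_X (q : ℝ) :
    qDerivPS q (2 * PowerSeries.X : PowerSeries ℝ) = (2 : PowerSeries ℝ) := by
  ext n
  rw [coeff_qDerivPS]
  cases n with
  | zero => simp [qInt]
  | succ m =>
    have e2 : (2 : PowerSeries ℝ) = PowerSeries.C 2 := by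
      rw [map_ofNat]
    rw [e2, PowerSeries.coeff_C_mul, PowerSeries.coeff_C, PowerSeries.coeff_X]
    simp

lemma rescale_X' (q : ℝ) : PowerSeries.rescale q (PowerSeries.X : PowerSeries ℝ)
    = PowerSeries.C q * PowerSeries.X := by
  ext n
  rw [PowerSeries.coeff_rescale]
  cases n with
  | zero => simp
  | succ m =>
    cases m with
    | zero => simp
    | succ k => simp [PowerSeries.coeff_X, PowerSeries.coeff_C_mul]

lemma qDerivPS_mul (q : ℝ) (u v : PowerSeries ℝ) :
    qDerivPS q (u * v) = PowerSeries.rescale q u * qDerivPS q v + qDerivPS q u * v := by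
  ext n
  rw [coeff_qDerivPS, map_add, PowerSeries.coeff_mul, PowerSeries.coeff_mul,
    PowerSeries.coeff_mul]
  rw [Finset.Nat.sum_antidiagonal_eq_sum_range_succ
    (f := fun i j => PowerSeries.coeff i u * PowerSeries.coeff j v)]
  rw [Finset.Nat.sum_antidiagonal_eq_sum_range_succ
    (f := fun i j => PowerSeries.coeff i (PowerSeries.rescale q u)
      * PowerSeries.coeff j (qDerivPS q v))]
  rw [Finset.Nat.sum_antidiagonal_eq_sum_range_succ
    (f := fun i j => PowerSeries.coeff i (qDerivPS q u) * PowerSeries.coeff j v)]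
  simp only [PowerSeries.coeff_rescale, coeff_qDerivPS]
  rw [Finset.mul_sum]
  have key : ∀ i ∈ Finset.range (n + 2),
      qInt q (n + 1) * (PowerSeries.coeff i u * PowerSeries.coeff (n + 1 - i) v)
      = q ^ i * PowerSeries.coeff i u * (qInt q (n + 1 - i) * PowerSeries.coeff (n + 1 - i) v)
        + (qInt q i * PowerSeries.coeff i u) * PowerSeries.coeff (n + 1 - i) v := by
    intro i hi
    have hile : i ≤ n + 1 := by simpa [Nat.lt_succ_iff] using hi
    have : qInt q (n + 1) = qInt q i + q ^ i * qInt q (n + 1 - i) := by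
      conv_lhs => rw [← Nat.add_sub_cancel' hile, qInt_add']
    rw [this]; ring
  rw [Finset.sum_congr rfl key, Finset.sum_add_distrib]
  congr 1
  · rw [Finset.sum_range_succ]
    simp only [Nat.sub_self, qInt]
    simp only [Finset.range_zero, Finset.sum_empty, zero_mul, mul_zero, add_zero]
    apply Finset.sum_congr rfl
    intro i hi
    have : n + 1 - i = n - i + 1 := by
      have : i ≤ n := by simpa [Nat.lt_succ_iff] using hi
      omega
    rw [this]
  · rw [Finset.sum_range_succ']
    simp only [qInt, Finset.range_zero, Finset.sum_empty, zero_mul, mul_zero, add_zero,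
      Nat.sub_zero]
    apply Finset.sum_congr rfl
    intro i _
    rw [Nat.succ_sub_succ]

section main

variable {q : ℝ}

lemma g_zero (g : ℕ → ℝ)
    (hg : (qExp q + 1) * PowerSeries.mk (fun n => g n / qFact q n) = 2 * PowerSeries.X) :
    g 0 = 0 := by
  have := congrArg (PowerSeries.coeff 0) hg
  rw [PowerSeries.coeff_mul] at this
  simpa [qExp, qFact] using this

lemma g_one (g : ℕ → ℝ)
    (hg : (qExp q + 1) * PowerSeries.mk (fun n => g n / qFact q n) = 2 * PowerSeries.X) :
    g 1 = 1 := by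
  have h0 := g_zero g hg
  have := congrArg (PowerSeries.coeff 1) hg
  rw [PowerSeries.coeff_mul, Finset.Nat.sum_antidiagonal_eq_sum_range_succ_mk] at this
  simp [qExp, qFact, qInt, Finset.sum_range_succ, h0, map_ofNat] at this
  linarith

lemma quad (hq0 : 0 < q) (g : ℕ → ℝ)
    (hg : (qExp q + 1) * PowerSeries.mk (fun n => g n / qFact q n) = 2 * PowerSeries.X)
    (M : ℕ) :
    2 * q * (qInt q (M+1) * (g (M+1) / qFact q (M+1))) + 2 * (q ^ M * (g M / qFact q M))
      = 2 * (q ^ (M+1) * (g (M+1) / qFact q (M+1)))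
        + ∑ p ∈ Finset.HasAntidiagonal.antidiagonal (M+1),
            (g p.1 / qFact q p.1) * (q ^ p.2 * (g p.2 / qFact q p.2)) := by
  set F : PowerSeries ℝ := PowerSeries.mk (fun n => g n / qFact q n) with hF
  have hD : qDerivPS q ((qExp q + 1) * F) = (2 : PowerSeries ℝ) := by
    rw [hg, qDerivPS_two_X]
  rw [qDerivPS_mul, qDerivPS_add, qDerivPS_one, qDerivPS_qExp hq0, add_zero, map_add,
    map_one] at hD
  have hres : (PowerSeries.rescale q (qExp q) + 1) * PowerSeries.rescale q F
      = 2 * (PowerSeries.C q * PowerSeries.X) := by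
    have := congrArg (PowerSeries.rescale q) hg
    rw [map_mul, map_add, map_one, map_mul, rescale_X'] at this
    rw [this]
    congr 1
    rw [map_ofNat]
  have hmul := congrArg (· * PowerSeries.rescale q F) hD
  simp only [add_mul] at hmul
  have hEF : qExp q * F = 2 * PowerSeries.X - F := by
    have : qExp q * F + F = 2 * PowerSeries.X := by rw [← hg]; ring
    linear_combination this
  have key : 2 * (PowerSeries.C q * (PowerSeries.X * qDerivPS q F))
      + 2 * (PowerSeries.X * PowerSeries.rescale q F)
      = 2 * PowerSeries.rescale q F + F * PowerSeries.rescale q F := by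
    have h1 : (PowerSeries.rescale q (qExp q) + 1) * qDerivPS q F * PowerSeries.rescale q F
        = 2 * (PowerSeries.C q * (PowerSeries.X * qDerivPS q F)) := by
      calc (PowerSeries.rescale q (qExp q) + 1) * qDerivPS q F * PowerSeries.rescale q F
          = ((PowerSeries.rescale q (qExp q) + 1) * PowerSeries.rescale q F)
            * qDerivPS q F := by ring
        _ = 2 * (PowerSeries.C q * (PowerSeries.X * qDerivPS q F)) := by rw [hres]; ring
    have h2 : qExp q * F * PowerSeries.rescale q F
        = (2 * PowerSeries.X - F) * PowerSeries.rescale q F := by rw [hEF]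
    linear_combination hmul - h1 - h2
  have hc := congrArg (PowerSeries.coeff (M+1)) key
  rw [map_add, map_add] at hc
  have e2 : (2 : PowerSeries ℝ) = PowerSeries.C 2 := by rw [map_ofNat]
  rw [e2] at hc
  rw [PowerSeries.coeff_C_mul, PowerSeries.coeff_C_mul, PowerSeries.coeff_C_mul,
    PowerSeries.coeff_C_mul, PowerSeries.coeff_succ_X_mul, PowerSeries.coeff_succ_X_mul,
    PowerSeries.coeff_mul] at hc
  simp only [coeff_qDerivPS, PowerSeries.coeff_rescale, hF, PowerSeries.coeff_mk] at hc
  linear_combination hc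

lemma diamond (hq0 : 0 < q) (g : ℕ → ℝ)
    (hg : (qExp q + 1) * PowerSeries.mk (fun n => g n / qFact q n) = 2 * PowerSeries.X)
    (K : ℕ) :
    (∑ j ∈ Finset.range K,
        q ^ j * (g j / qFact q j) * (g (K+1-j) / qFact q (K+1-j)))
      - q ^ K * (g K / qFact q K)
      + 2 * q * (q ^ K * (g (K+1) / qFact q (K+1)))
      - 2 * q * (qInt q (K+1) * (g (K+1) / qFact q (K+1))) = 0 := by
  have h0 : g 0 = 0 := g_zero g hg
  have h1 : g 1 = 1 := g_one g hg
  cases K with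
  | zero => simp [h0, qInt_one', qFact]
  | succ L =>
    have hq := quad hq0 g hg (L+1)
    rw [Finset.Nat.sum_antidiagonal_eq_sum_range_succ_mk] at hq
    rw [show (L + 1 + 1).succ = (L + 1) + 2 from rfl] at hq
    simp only [] at hq
    rw [Finset.sum_range_succ', Finset.sum_range_succ'] at hq
    have hrefl : ∑ i ∈ Finset.range (L+1),
        (g (i+1+1) / qFact q (i+1+1)) * (q ^ (L+1+1-(i+1+1))
          * (g (L+1+1-(i+1+1)) / qFact q (L+1+1-(i+1+1))))
        = ∑ j ∈ Finset.range (L+1),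
            q ^ j * (g j / qFact q j) * (g (L+1+1-j) / qFact q (L+1+1-j)) := by
      rw [← Finset.sum_range_reflect]
      apply Finset.sum_congr rfl
      intro j hj
      have hjL : j ≤ L := by simpa [Nat.lt_succ_iff] using hj
      have e1 : L + 1 - 1 - j + 1 + 1 = L + 1 + 1 - j := by omega
      rw [e1]
      have e2 : L + 1 + 1 - (L + 1 + 1 - j) = j := by omega
      rw [e2]
      ring
    rw [hrefl] at hq
    have ht1 : g (0+1) / qFact q (0+1) = 1 := by
      norm_num [h1, qFact, qInt_one']
    have ht0 : g 0 / qFact q 0 = 0 := by norm_num [h0, qFact]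
    rw [ht1, ht0] at hq
    have e3 : L + 1 + 1 - (0 + 1) = L + 1 := by omega
    rw [e3] at hq
    linear_combination -hq

end main

lemma coeff_qGenocchiPoly (q : ℝ) (g : ℕ → ℝ) (k m : ℕ) :
    (qGenocchiPoly q g k).coeff m
      = if m ≤ k then qBinom q k (k - m) * g (k - m) else 0 := by
  rw [qGenocchiPoly, Polynomial.finset_sum_coeff]
  simp only [Polynomial.coeff_C_mul, Polynomial.coeff_X_pow]
  split_ifs with hm
  · rw [Finset.sum_eq_single (k - m)]
    · simp [Nat.sub_sub_self hm]
    · intro j hj hne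
      have : ¬ (m = k - j) := by
        simp only [Finset.mem_range, Nat.lt_succ_iff] at hj
        omega
      simp [this]
    · intro h
      exfalso
      exact h (Finset.mem_range.2 (by omega))
  · apply Finset.sum_eq_zero
    intro j hj
    have : ¬ (m = k - j) := by omega
    simp [this]

lemma coeff_qGenocchiPoly_comp (q : ℝ) (g : ℕ → ℝ) (k m : ℕ) :
    ((qGenocchiPoly q g k).comp (Polynomial.C q * Polynomial.X)).coeff m
      = q ^ m * (qGenocchiPoly q g k).coeff m := by
  rw [qGenocchiPoly]
  have hcomp : ((∑ j ∈ Finset.range (k + 1), Polynomial.C (qBinom q k j * g j)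
      * Polynomial.X ^ (k - j)).comp (Polynomial.C q * Polynomial.X))
    = ∑ j ∈ Finset.range (k + 1), Polynomial.C (qBinom q k j * g j * q ^ (k - j))
      * Polynomial.X ^ (k - j) := by
    rw [Polynomial.sum_comp]
    apply Finset.sum_congr rfl
    intro j _
    simp only [Polynomial.mul_comp, Polynomial.C_comp, Polynomial.X_pow_comp, mul_pow,
      ← Polynomial.C_pow, map_mul]
    ring
  rw [hcomp]
  rw [Polynomial.finset_sum_coeff, Polynomial.finset_sum_coeff, Finset.mul_sum]
  apply Finset.sum_congr rfl
  intro j _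
  simp only [Polynomial.coeff_C_mul, Polynomial.coeff_X_pow]
  split_ifs with h
  · rw [h]; ring
  · ring

set_option maxHeartbeats 2000000 in
/-- The q-Genocchi polynomials satisfy the linear homogeneous recurrence
`(1/(2q)) Σ_{k=0}^{n-2} [n choose k]_q g_{n-k,q} q^k G_{k,q}(x)
  + [n]_q (xq − 1/(2q)) q^(n-1) G_{n-1,q}(x) + q^(n-1) G_{n,q}(x) − [n]_q G_{n,q}(qx) = 0`
for n ≥ 1. -/
theorem qGenocchi_recurrence (q : ℝ) (hq0 : 0 < q) (hq1 : q < 1)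
    (g : ℕ → ℝ)
    (hg : (qExp q + 1) * PowerSeries.mk (fun n => g n / qFact q n) = 2 * PowerSeries.X)
    (n : ℕ) (hn : 1 ≤ n) :
    Polynomial.C (1 / (2 * q))
        * (∑ k ∈ Finset.range (n - 1),
            Polynomial.C (qBinom q n k * g (n - k) * q ^ k) * qGenocchiPoly q g k)
      + Polynomial.C (qInt q n)
          * (Polynomial.C q * Polynomial.X - Polynomial.C (1 / (2 * q)))
          * Polynomial.C (q ^ (n - 1)) * qGenocchiPoly q g (n - 1)
      + Polynomial.C (q ^ (n - 1)) * qGenocchiPoly q g n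
      - Polynomial.C (qInt q n)
          * (qGenocchiPoly q g n).comp (Polynomial.C q * Polynomial.X) = 0 := by
  have hq1' : q ≠ 1 := ne_of_lt hq1
  have hqne : q ≠ 0 := hq0.ne'
  have h0 : g 0 = 0 := g_zero g hg
  have hqf : ∀ k, qFact q k ≠ 0 := fun k => (qFact_pos' hq0 k).ne'
  refine Polynomial.ext fun m => ?_
  rw [Polynomial.coeff_zero]
  have hmid : Polynomial.C (qInt q n) * (Polynomial.C q * Polynomial.X
        - Polynomial.C (1/(2*q))) * Polynomial.C (q^(n-1)) * qGenocchiPoly q g (n-1)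
      = Polynomial.C (qInt q n * q^(n-1) * q) * (Polynomial.X * qGenocchiPoly q g (n-1))
        - Polynomial.C (qInt q n * q^(n-1) * (1/(2*q))) * qGenocchiPoly q g (n-1) := by
    simp only [Polynomial.C_mul]
    ring
  rw [hmid]
  rw [Polynomial.coeff_sub, Polynomial.coeff_add, Polynomial.coeff_add, Polynomial.coeff_sub]
  rw [Polynomial.coeff_C_mul, Polynomial.coeff_C_mul, Polynomial.coeff_C_mul,
    Polynomial.coeff_C_mul, Polynomial.coeff_C_mul, coeff_qGenocchiPoly_comp,
    Polynomial.finset_sum_coeff]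
  simp only [Polynomial.coeff_C_mul, coeff_qGenocchiPoly]
  by_cases hmn : m + 1 ≤ n
  · obtain ⟨K, rfl⟩ : ∃ K, n = m + K + 1 := ⟨n - m - 1, by omega⟩
    have en1 : m + K + 1 - 1 = m + K := by omega
    have e2 : m + K - m = K := by omega
    have e3 : m + K + 1 - m = K + 1 := by omega
    rw [en1, if_pos (show m ≤ m + K by omega), if_pos (show m ≤ m + K + 1 by omega), e2, e3]
    rw [Finset.sum_range_add]
    have hz : ∀ x ∈ Finset.range m, qBinom q (m+K+1) x * g (m+K+1 - x) * q ^ x *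
        (if m ≤ x then qBinom q x (x - m) * g (x - m) else 0) = 0 := by
      intro x hx
      rw [if_neg (by simp only [Finset.mem_range] at hx; omega)]
      ring
    rw [Finset.sum_congr rfl hz, Finset.sum_const_zero, zero_add]
    have hsum2 : ∑ j ∈ Finset.range K, (qBinom q (m+K+1) (m+j) * g (m+K+1 - (m+j)) * q ^ (m+j) *
          if m ≤ m + j then qBinom q (m+j) (m+j-m) * g (m+j-m) else 0)
        = qFact q (m+K+1) / qFact q m * q ^ m
          * ∑ j ∈ Finset.range K,
              q ^ j * (g j / qFact q j) * (g (K+1-j) / qFact q (K+1-j)) := by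
      rw [Finset.mul_sum]
      apply Finset.sum_congr rfl
      intro j hj
      have hjK : j < K := Finset.mem_range.mp hj
      rw [if_pos (by omega)]
      have f1 : m + K + 1 - (m + j) = K + 1 - j := by omega
      have f2 : m + j - m = j := by omega
      have f3 : m + j - j = m := by omega
      have f4 : K + 1 - j = (K - j) + 1 := by omega
      rw [f1, f2, qBinom, qBinom, f1, f3]
      rw [pow_add]
      have n1 := hqf (m+j)
      have n2 := hqf (K+1-j)
      have n3 := hqf j
      have n4 := hqf m
      have n5 := hqf (m+K+1)
      field_simp
    rw [hsum2]
    have hdia := diamond hq0 g hg K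
    have hS : ∑ j ∈ Finset.range K, q ^ j * (g j / qFact q j) * (g (K+1-j) / qFact q (K+1-j))
        = q ^ K * (g K / qFact q K) + 2 * q * (qInt q (K+1) * (g (K+1) / qFact q (K+1)))
          - 2 * q * (q ^ K * (g (K+1) / qFact q (K+1))) := by linarith [hdia]
    rw [hS]
    have hq1ne : q - 1 ≠ 0 := sub_ne_zero_of_ne hq1'
    rcases m with _ | m'
    · simp only [Nat.zero_add]
      have hx0 : (Polynomial.X * qGenocchiPoly q g K).coeff 0 = 0 := by
        simp [Polynomial.mul_coeff_zero]
      rw [hx0]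
      simp only [qBinom]
      have s1 : K - K = 0 := by omega
      have s2 : K + 1 - (K + 1) = 0 := by omega
      rw [s1, s2]
      have hfn : qFact q (K + 1) = qFact q K * qInt q (K + 1) := rfl
      have hf0 : qFact q 0 = 1 := rfl
      rw [hfn, hf0]
      have n1 := hqf K
      have n2 := hqf (K+1)
      rw [hfn] at n2
      have n2' : qInt q (K+1) ≠ 0 := (qInt_pos' hq0 K.succ_pos).ne'
      have n2'' := hqf K
      simp only [pow_add, pow_one, pow_zero]
      field_simp
      ring
    · rw [Polynomial.coeff_X_mul, coeff_qGenocchiPoly, if_pos (show m' ≤ m' + 1 + K by omega)]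
      have s1 : m' + 1 + K - m' = K + 1 := by omega
      have s2 : m' + 1 + K - K = m' + 1 := by omega
      have s3 : m' + 1 + K - (K + 1) = m' := by omega
      have s4 : m' + 1 + K + 1 - (K + 1) = m' + 1 := by omega
      simp only [qBinom, s1, s2, s3, s4]
      have hfn : qFact q (m' + 1 + K + 1) = qFact q (m' + 1 + K) * qInt q (m' + 1 + K + 1) := rfl
      have hfm : qFact q (m' + 1) = qFact q m' * qInt q (m' + 1) := rfl
      have R3 : qInt q (m' + 1 + K + 1) = qInt q (K+1) + q^(K+1) * qInt q (m'+1) := by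
        rw [show m' + 1 + K + 1 = (K+1) + (m'+1) by omega, qInt_add']
      rw [hfn, hfm, R3]
      have n1 := hqf K
      have n2 := hqf (K+1)
      have n3 := hqf m'
      have n4 := hqf (m' + 1 + K)
      have n5 : qInt q (m'+1) ≠ 0 := (qInt_pos' hq0 m'.succ_pos).ne'
      have n6 : qInt q (K+1) + q^(K+1) * qInt q (m'+1) ≠ 0 := by
        have := qInt_pos' hq0 K.succ_pos
        have := qInt_pos' hq0 m'.succ_pos
        positivity
      simp only [pow_add, pow_one, pow_zero]
      field_simp
      ring
  · push_neg at hmn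
    obtain ⟨m', rfl⟩ : ∃ m', m = m' + 1 := ⟨m - 1, by omega⟩
    rw [Polynomial.coeff_X_mul, coeff_qGenocchiPoly]
    have hsum : ∀ x ∈ Finset.range (n-1), qBinom q n x * g (n - x) * q ^ x *
        (if m'+1 ≤ x then qBinom q x (x - (m'+1)) * g (x - (m'+1)) else 0) = 0 := by
      intro x hx
      rw [if_neg (by simp only [Finset.mem_range] at hx; omega)]
      ring
    rw [Finset.sum_congr rfl hsum, Finset.sum_const_zero]
    rcases eq_or_lt_of_le (show n ≤ m' + 1 by omega) with heq | hlt
    · have e1 : ¬ (m' + 1 ≤ n - 1) := by omega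
      have e2 : m' + 1 ≤ n := by omega
      have e3 : n - (m'+1) = 0 := by omega
      have e4 : m' ≤ n - 1 := by omega
      have e5 : n - 1 - m' = 0 := by omega
      rw [if_neg e1, if_pos e2, if_pos e4, e3, e5, h0]
      ring
    · have e1 : ¬ (m' + 1 ≤ n - 1) := by omega
      have e2 : ¬ (m' + 1 ≤ n) := by omega
      have e4 : ¬ (m' ≤ n - 1) := by omega
      rw [if_neg e1, if_neg e2, if_neg e4]
      ring
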